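/- For every finite set B of finite relational structures over a finite signature, there exists a finite set A of finite structures such that a finite structure C admits a full homomorphism to some member of B if and only if no member of A admits a full homomorphism into C. -/

import Mathlib

/-- A full homomorphism between relational structures: it preserves each relation
and its complement. -/
def FullHom {σ : Type} {ar : σ → ℕ} {A B : Type}
    (RA : ∀ s : σ, (Fin (ar s) → A) → Prop)
    (RB : ∀ s : σ, (Fin (ar s) → B) → Prop) (f : A → B) : Prop :=
  ∀ (s : σ) (t : Fin (ar s) → A), RA s t ↔ RB s (f ∘ t)

/-- A homomorphism between relational structures. -/
def StrHom {σ : Type} {ar : σ → ℕ} {A B : Type}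
    (RA : ∀ s : σ, (Fin (ar s) → A) → Prop)
    (RB : ∀ s : σ, (Fin (ar s) → B) → Prop) (f : A → B) : Prop :=
  ∀ (s : σ) (t : Fin (ar s) → A), RA s t → RB s (f ∘ t)

/-- Two elements are interchangeable if replacing one by the other in any coordinate of
any tuple preserves membership in every relation. -/
def Interchangeable {σ : Type} {ar : σ → ℕ} {A : Type}
    (RA : ∀ s : σ, (Fin (ar s) → A) → Prop) (a b : A) : Prop :=
  ∀ (s : σ) (t : Fin (ar s) → A) (i : Fin (ar s)),
    RA s (Function.update t i a) ↔ RA s (Function.update t i b)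

/-- Twins: distinct interchangeable elements. -/
def Twins {σ : Type} {ar : σ → ℕ} {A : Type}
    (RA : ∀ s : σ, (Fin (ar s) → A) → Prop) (a b : A) : Prop :=
  a ≠ b ∧ Interchangeable RA a b

/-- A structure is point-determining if it contains no twins. -/
def PointDetermining {σ : Type} {ar : σ → ℕ} {A : Type}
    (RA : ∀ s : σ, (Fin (ar s) → A) → Prop) : Prop :=
  ∀ a b : A, ¬ Twins RA a b

/-- `(C, RC)` is a blow-up of `(B, RB)`: it contains an induced copy of `B` such that
every element outside the copy has a twin inside the copy. -/
def IsBlowUpOf {σ : Type} {ar : σ → ℕ} {C B : Type}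
    (RC : ∀ s : σ, (Fin (ar s) → C) → Prop)
    (RB : ∀ s : σ, (Fin (ar s) → B) → Prop) : Prop :=
  ∃ e : B → C, Function.Injective e ∧ FullHom RB RC e ∧
    ∀ c : C, c ∉ Set.range e → ∃ b : B, Twins RC c (e b)

/-- `(F, RF)` embeds into `(A, RA)`: there is an injective full homomorphism. -/
def Embeds {σ : Type} {ar : σ → ℕ} {F A : Type}
    (RF : ∀ s : σ, (Fin (ar s) → F) → Prop)
    (RA : ∀ s : σ, (Fin (ar s) → A) → Prop) : Prop :=
  ∃ e : F → A, Function.Injective e ∧ FullHom RF RA e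

section Aux

variable {σ : Type} {ar : σ → ℕ}

lemma myFullHom_comp {A B C : Type}
    {RA : ∀ s : σ, (Fin (ar s) → A) → Prop}
    {RB : ∀ s : σ, (Fin (ar s) → B) → Prop}
    {RC : ∀ s : σ, (Fin (ar s) → C) → Prop}
    {g : A → B} {f : B → C} (hg : FullHom RA RB g) (hf : FullHom RB RC f) :
    FullHom RA RC (f ∘ g) := by
  intro s t
  exact (hg s t).trans (hf s (g ∘ t))

lemma myInterch_refl {A : Type} (R : ∀ s : σ, (Fin (ar s) → A) → Prop) (a : A) :
    Interchangeable R a a := fun _ _ _ => Iff.rfl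

lemma myInterch_symm {A : Type} {R : ∀ s : σ, (Fin (ar s) → A) → Prop} {a b : A}
    (h : Interchangeable R a b) : Interchangeable R b a := fun s t i => (h s t i).symm

lemma myInterch_trans {A : Type} {R : ∀ s : σ, (Fin (ar s) → A) → Prop} {a b c : A}
    (h : Interchangeable R a b) (h' : Interchangeable R b c) :
    Interchangeable R a c := fun s t i => (h s t i).trans (h' s t i)

/-- Replacing each coordinate of a tuple by an interchangeable element preserves
membership in every relation. -/
lemma myInterch_tuple {A : Type} (R : ∀ s : σ, (Fin (ar s) → A) → Prop) (s : σ) :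
    ∀ (u : Finset (Fin (ar s))) (t t' : Fin (ar s) → A),
      (∀ i, Interchangeable R (t i) (t' i)) → (∀ i ∉ u, t i = t' i) →
      (R s t ↔ R s t') := by
  intro u
  induction u using Finset.induction_on with
  | empty =>
    intro t t' _ h
    have : t = t' := funext fun i => h i (Finset.notMem_empty i)
    rw [this]
  | @insert i u hiu ih =>
    intro t t' hint hout
    have h1 : R s t ↔ R s (Function.update t i (t' i)) := by
      have := hint i s t i
      rwa [Function.update_eq_self] at this
    refine h1.trans (ih _ _ ?_ ?_)
    · intro j
      rcases eq_or_ne j i with rfl | hj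
      · rw [Function.update_self]; exact myInterch_refl R _
      · rw [Function.update_of_ne hj]; exact hint j
    · intro j hj
      rcases eq_or_ne j i with rfl | hne
      · rw [Function.update_self]
      · rw [Function.update_of_ne hne]
        exact hout j (by simp [Finset.mem_insert, hne, hj])

end Aux

/-- Key construction: if a finite structure `C` has no full homomorphism to any `B`,
then it has a small subset whose induced substructure has no full homomorphism to any
`B` either. -/
lemma myKey {σ : Type} {ar : σ → ℕ} (p : ℕ) (bsz : Fin p → ℕ)
    (BR : ∀ b : Fin p, ∀ s : σ, (Fin (ar s) → Fin (bsz b)) → Prop)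
    (N r : ℕ) (hN : ∀ b, bsz b ≤ N) (hr : ∀ s, ar s ≤ r)
    (Ct : Type) [Fintype Ct] [DecidableEq Ct]
    (RC : ∀ s : σ, (Fin (ar s) → Ct) → Prop)
    (hC : ¬ ∃ (b : Fin p) (f : Ct → Fin (bsz b)), FullHom RC (BR b) f) :
    ∃ S : Finset Ct, S.card ≤ (N+1) + (N+1)*(N+1)*r ∧
      ¬ ∃ (b : Fin p) (h : {x // x ∈ S} → Fin (bsz b)),
        FullHom (fun s (t : Fin (ar s) → {x // x ∈ S}) => RC s (fun i => (t i : Ct)))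
          (BR b) h := by
  classical
  by_cases hv : ∃ v : Fin (N+1) → Ct, ∀ i j, i ≠ j → ¬ Interchangeable RC (v i) (v j)
  · -- many pairwise non-interchangeable elements
    obtain ⟨v, hvne⟩ := hv
    have hw : ∀ q : Fin (N+1) × Fin (N+1), ∃ F : Finset Ct, F.card ≤ r ∧
        (q.1 ≠ q.2 → ∃ (s : σ) (t : Fin (ar s) → Ct) (pos : Fin (ar s)),
          (∀ k, t k ∈ F) ∧
          ¬ (RC s (Function.update t pos (v q.1)) ↔ RC s (Function.update t pos (v q.2)))) := by
      intro q
      by_cases hq : q.1 = q.2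
      · exact ⟨∅, by simp, fun h => absurd hq h⟩
      · have := hvne q.1 q.2 hq
        unfold Interchangeable at this
        simp only [not_forall] at this
        obtain ⟨s, t, pos, hx⟩ := this
        refine ⟨Finset.image t Finset.univ, ?_, fun _ => ⟨s, t, pos, ?_, hx⟩⟩
        · calc (Finset.image t Finset.univ).card ≤ (Finset.univ : Finset (Fin (ar s))).card :=
                Finset.card_image_le
            _ = ar s := by simp
            _ ≤ r := hr s
        · intro k; exact Finset.mem_image_of_mem t (Finset.mem_univ k)
    choose W hWcard hWprop using hw
    refine ⟨Finset.image v Finset.univ ∪ Finset.univ.biUnion W, ?_, ?_⟩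
    · refine le_trans (Finset.card_union_le _ _) (Nat.add_le_add ?_ ?_)
      · calc (Finset.image v Finset.univ).card ≤ (Finset.univ : Finset (Fin (N+1))).card :=
              Finset.card_image_le
          _ = N+1 := by simp
      · refine le_trans (Finset.card_biUnion_le) ?_
        calc (∑ q : Fin (N+1) × Fin (N+1), (W q).card)
            ≤ (Finset.univ : Finset (Fin (N+1) × Fin (N+1))).card * r := by
              refine le_trans (Finset.sum_le_card_nsmul _ _ r (fun q _ => hWcard q)) ?_
              simp [smul_eq_mul]
          _ = (N+1)*(N+1)*r := by simp [Fintype.card_prod]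
    · rintro ⟨b, h, hfull⟩
      have hvmem : ∀ i, v i ∈ Finset.image v Finset.univ ∪ Finset.univ.biUnion W := fun i =>
        Finset.mem_union_left _ (Finset.mem_image_of_mem v (Finset.mem_univ i))
      set v' : Fin (N+1) → {x // x ∈ Finset.image v Finset.univ ∪ Finset.univ.biUnion W} :=
        fun i => ⟨v i, hvmem i⟩ with hv'def
      have hcard : Fintype.card (Fin (bsz b)) < Fintype.card (Fin (N+1)) := by
        simp only [Fintype.card_fin]
        exact Nat.lt_succ_of_le (hN b)
      obtain ⟨i, j, hij, heq⟩ := Fintype.exists_ne_map_eq_of_card_lt (fun i => h (v' i)) hcard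
      obtain ⟨s, t, pos, htW, hxor⟩ := hWprop (i, j) hij
      have htS : ∀ k, t k ∈ Finset.image v Finset.univ ∪ Finset.univ.biUnion W := fun k =>
        Finset.mem_union_right _ (Finset.mem_biUnion.mpr ⟨(i, j), Finset.mem_univ _, htW k⟩)
      set t' : Fin (ar s) → {x // x ∈ Finset.image v Finset.univ ∪ Finset.univ.biUnion W} :=
        fun k => ⟨t k, htS k⟩ with ht'def
      apply hxor
      have key : ∀ m : Fin (N+1), RC s (Function.update t pos (v m)) ↔
          BR b s (Function.update (h ∘ t') pos (h (v' m))) := by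
        intro m
        have h2 := hfull s (Function.update t' pos (v' m))
        have e1 : (fun k => ((Function.update t' pos (v' m) k : _) : Ct)) =
            Function.update t pos (v m) := by
          funext k
          rcases eq_or_ne k pos with rfl | hk
          · simp [hv'def]
          · simp [Function.update_of_ne hk, ht'def]
        have e2 : (h ∘ Function.update t' pos (v' m)) =
            Function.update (h ∘ t') pos (h (v' m)) :=
          Function.comp_update h t' pos (v' m)
        rw [← e1, ← e2]
        exact h2
      rw [key i, key j, heq]
  · -- few interchangeability classes: take representatives
    push_neg at hv
    set st : Setoid Ct := ⟨Interchangeable RC,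
      ⟨myInterch_refl RC, myInterch_symm, myInterch_trans⟩⟩ with hst
    set rep : Ct → Ct := fun c => (Quotient.mk st c).out with hrep
    have hrep_interch : ∀ c, Interchangeable RC c (rep c) := by
      intro c
      exact myInterch_symm (Quotient.mk_out (s := st) c)
    have hrep_eq : ∀ c d : Ct, Interchangeable RC (rep c) (rep d) → rep c = rep d := by
      intro c d hint
      have : (Quotient.mk st (rep c)) = Quotient.mk st (rep d) := Quotient.sound hint
      rw [Quotient.out_eq, Quotient.out_eq] at this
      exact congrArg Quotient.out this
    refine ⟨Finset.image rep Finset.univ, ?_, ?_⟩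
    · -- card ≤ N
      refine le_trans ?_ (Nat.le_add_right (N+1) _)
      refine le_trans ?_ (Nat.le_succ N)
      by_contra hbig
      push_neg at hbig
      have : N + 1 ≤ (Finset.image rep Finset.univ).card := hbig
      rw [← Fintype.card_coe] at this
      rw [← Fintype.card_fin (N+1)] at this
      obtain ⟨emb⟩ := Function.Embedding.nonempty_of_card_le this
      obtain ⟨i, j, hij, hint⟩ := hv (fun i => ((emb i : {x // x ∈ Finset.image rep Finset.univ}) : Ct))
      -- elements of the image are reps; interchangeable reps are equal
      obtain ⟨c, _, hc⟩ := Finset.mem_image.mp (emb i).2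
      obtain ⟨d, _, hd⟩ := Finset.mem_image.mp (emb j).2
      have : ((emb i : {x // x ∈ _}) : Ct) = ((emb j : {x // x ∈ _}) : Ct) := by
        rw [← hc, ← hd]
        apply hrep_eq
        rw [hc, hd]
        exact hint
      exact hij (emb.injective (Subtype.ext this))
    · rintro ⟨b, h, hfull⟩
      have hmem : ∀ c, rep c ∈ Finset.image rep Finset.univ := fun c =>
        Finset.mem_image_of_mem rep (Finset.mem_univ c)
      set φ : Ct → {x // x ∈ Finset.image rep Finset.univ} := fun c => ⟨rep c, hmem c⟩ with hφdef
      apply hC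
      refine ⟨b, h ∘ φ, ?_⟩
      intro s t
      have h1 : RC s t ↔ RC s (fun i => rep (t i)) := by
        refine myInterch_tuple RC s Finset.univ t (fun i => rep (t i))
          (fun i => hrep_interch (t i)) (fun i hi => absurd (Finset.mem_univ i) hi)
      rw [h1]
      have h2 := hfull s (φ ∘ t)
      exact h2


/-- For every finite set `𝓑` of finite relational structures over a finite
signature, there exists a finite set `𝓐` of finite structures such that a finite
structure `C` admits a full homomorphism to some member of `𝓑` if and only if no member
of `𝓐` admits a full homomorphism into `C`. -/
theorem stmt_7 {σ : Type} {ar : σ → ℕ} [Fintype σ] (p : ℕ) (bsz : Fin p → ℕ)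
    (BR : ∀ b : Fin p, ∀ s : σ, (Fin (ar s) → Fin (bsz b)) → Prop) :
    ∃ (q : ℕ) (asz : Fin q → ℕ)
      (AR : ∀ a : Fin q, ∀ s : σ, (Fin (ar s) → Fin (asz a)) → Prop),
      ∀ (Ct : Type), Fintype Ct → ∀ (RC : ∀ s : σ, (Fin (ar s) → Ct) → Prop),
        ((∃ (b : Fin p) (f : Ct → Fin (bsz b)), FullHom RC (BR b) f) ↔
          ∀ a : Fin q, ¬ ∃ g : Fin (asz a) → Ct, FullHom (AR a) RC g) := by
  classical
  set N := (Finset.univ : Finset (Fin p)).sup bsz with hNdef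
  set r := (Finset.univ : Finset σ).sup ar with hrdef
  set M := (N+1) + (N+1)*(N+1)*r with hMdef
  let J := (m : Fin (M+1)) × (∀ s : σ, (Fin (ar s) → Fin m.val) → Prop)
  haveI : Fintype J := by infer_instance
  let P : J → Prop := fun j =>
    ¬ ∃ (b : Fin p) (f : Fin j.1.val → Fin (bsz b)), FullHom j.2 (BR b) f
  let J' := {j : J // P j}
  haveI : Fintype J' := by infer_instance
  let e : Fin (Fintype.card J') ≃ J' := (Fintype.equivFin J').symm
  refine ⟨Fintype.card J', fun a => ((e a).1.1 : ℕ), fun a => (e a).1.2, ?_⟩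
  intro Ct instCt RC
  haveI := instCt
  constructor
  · rintro ⟨b, f, hf⟩ a ⟨g, hg⟩
    exact (e a).2 ⟨b, f ∘ g, myFullHom_comp hg hf⟩
  · intro hA
    by_contra hC
    obtain ⟨S, hcard, hnohom⟩ := myKey p bsz BR N r
      (fun b => Finset.le_sup (Finset.mem_univ b))
      (fun s => Finset.le_sup (Finset.mem_univ s)) Ct RC hC
    have hm : S.card < M + 1 := Nat.lt_succ_of_le hcard
    let ε : {x // x ∈ S} ≃ Fin S.card := Fintype.equivFinOfCardEq (Fintype.card_coe S)
    let j : J := ⟨⟨S.card, hm⟩, fun s t => RC s (fun i => ((ε.symm (t i)) : Ct))⟩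
    have hPj : P j := by
      rintro ⟨b, f, hf⟩
      apply hnohom
      refine ⟨b, fun x => f (ε x), ?_⟩
      intro s t
      have h2 := hf s (fun i => ε (t i))
      simpa [Function.comp_def, j] using h2
    apply hA (e.symm ⟨j, hPj⟩)
    have hEA : e (e.symm ⟨j, hPj⟩) = ⟨j, hPj⟩ := e.apply_symm_apply _
    beta_reduce
    rw [hEA]
    exact ⟨fun i => (ε.symm i : Ct), fun s t => Iff.rfl⟩
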